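/- There exists a countable left-invariant metric semigroup that is not a monoid but contains an idempotent; explicitly, on the set G = { h^{n+1} : n ≥ 0 } ∪ { h^n g : n ≥ 0 } with multiplication h^n g^ε · h^{n'} g^{ε'} := h^{n+n'} g^{ε'}, the operation is associative, g is a left identity (hence idempotent), G has no two-sided identity, and the Manhattan distance d(h^n g^ε, h^{n'} g^{ε'}) := |n−n'| + |ε−ε'| is a left-invariant metric on G. -/

import Mathlib

/-- The carrier of the counterexample semigroup: pairs `(n, ε)` with `ε ∈ {0,1}`,
`(n, ε) ≠ (0, 0)`, where `(n, ε)` encodes `hⁿ gᵉ`. -/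
def Gc : Type := {p : ℕ × Fin 2 // p ≠ (0, 0)}

/-- The product `hⁿ gᵉ · hⁿ' gᵉ' = h^(n+n') gᵉ'`. -/
def gmul (x y : Gc) : Gc :=
  ⟨(x.1.1 + y.1.1, y.1.2), by
    intro h
    apply y.2
    have h1 : x.1.1 + y.1.1 = 0 := congrArg Prod.fst h
    have h2 : y.1.2 = 0 := congrArg Prod.snd h
    have h3 : y.1.1 = 0 := by omega
    have : y.1 = (y.1.1, y.1.2) := rfl
    rw [this, h3, h2]⟩

/-- The Manhattan distance `d(hⁿ gᵉ, hⁿ' gᵉ') = |n - n'| + |ε - ε'|`. -/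
noncomputable def gd (x y : Gc) : ℝ :=
  |(x.1.1 : ℝ) - (y.1.1 : ℝ)| + |((x.1.2 : ℕ) : ℝ) - ((y.1.2 : ℕ) : ℝ)|

/-- There is a countable left-invariant metric semigroup which is not a monoid but contains
an idempotent: the multiplication `gmul` on `Gc` is associative, `g = (0,1)` is a left
identity (hence idempotent), there is no two-sided identity, and the Manhattan distance is
a left-invariant metric. -/
theorem counterexample_leftInvariant_semigroup :
    (∀ x y z : Gc, gmul (gmul x y) z = gmul x (gmul y z)) ∧
    (∀ x : Gc, gmul ⟨(0, 1), by decide⟩ x = x) ∧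
    (gmul (⟨(0, 1), by decide⟩ : Gc) ⟨(0, 1), by decide⟩ = ⟨(0, 1), by decide⟩) ∧
    (¬ ∃ e : Gc, (∀ x : Gc, gmul e x = x) ∧ (∀ x : Gc, gmul x e = x)) ∧
    (∀ x : Gc, gd x x = 0) ∧
    (∀ x y : Gc, gd x y = 0 → x = y) ∧
    (∀ x y : Gc, gd x y = gd y x) ∧
    (∀ x y z : Gc, gd x z ≤ gd x y + gd y z) ∧
    (∀ c a b : Gc, gd (gmul c a) (gmul c b) = gd a b) := by

  refine ⟨?_, ?_, ?_, ?_, ?_, ?_, ?_, ?_, ?_⟩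
  · intro x y z
    unfold gmul
    simp [Nat.add_assoc]
    rfl
  · intro x
    unfold gmul
    simp
    rfl
  · rfl
  · rintro ⟨e, he1, he2⟩
    have h1 := he2 ⟨(1, 0), by decide⟩
    have h2 := he2 ⟨(0, 1), by decide⟩
    have e1 : e.1.2 = 0 := by
      have := congrArg (fun x : Gc => x.1.2) h1
      simpa [gmul] using this
    have e2 : e.1.2 = 1 := by
      have := congrArg (fun x : Gc => x.1.2) h2
      simpa [gmul] using this
    rw [e1] at e2; exact absurd e2 (by decide)
  · intro x; unfold gd; simp
  · intro x y h
    unfold gd at h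
    have h1 : |(x.1.1 : ℝ) - (y.1.1 : ℝ)| = 0 ∧ |((x.1.2 : ℕ) : ℝ) - ((y.1.2 : ℕ) : ℝ)| = 0 := by
      constructor <;> nlinarith [abs_nonneg ((x.1.1 : ℝ) - (y.1.1 : ℝ)), abs_nonneg (((x.1.2 : ℕ) : ℝ) - ((y.1.2 : ℕ) : ℝ))]
    have hn : x.1.1 = y.1.1 := by
      have := abs_eq_zero.mp h1.1
      exact_mod_cast sub_eq_zero.mp this
    have he : (x.1.2 : ℕ) = (y.1.2 : ℕ) := by
      have := abs_eq_zero.mp h1.2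
      exact_mod_cast sub_eq_zero.mp this
    apply Subtype.ext
    exact Prod.ext hn (Fin.ext he)
  · intro x y; unfold gd; rw [abs_sub_comm, abs_sub_comm ((x.1.2:ℕ):ℝ)]
  · intro x y z
    unfold gd
    have := abs_sub_abs_le_abs_sub ((x.1.1:ℝ)) ((y.1.1:ℝ))
    calc |(x.1.1 : ℝ) - (z.1.1 : ℝ)| + |((x.1.2 : ℕ) : ℝ) - ((z.1.2 : ℕ) : ℝ)|
        ≤ (|(x.1.1 : ℝ) - (y.1.1 : ℝ)| + |(y.1.1 : ℝ) - (z.1.1 : ℝ)|) + (|((x.1.2 : ℕ) : ℝ) - ((y.1.2 : ℕ) : ℝ)| + |((y.1.2 : ℕ) : ℝ) - ((z.1.2 : ℕ) : ℝ)|) := by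
          gcongr <;> exact abs_sub_le _ _ _
      _ = _ := by ring
  · intro c a b
    unfold gd gmul
    simp
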